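/- Single-shot achievability via the likelihood ratio test: let 0 < α < 1 and 0 < ε < 1, set Q := Σ_{x ∈ X} p(x)^α·q(x)^{1−α}, let γ := (1 + (ε/Q)^{1/(1−α)})^{−1}, and let Λ := {x ∈ X : γ·p(x) > (1−γ)·q(x)}. Then the test Λ satisfies Σ_{x ∉ Λ} p(x) ≤ ε and Σ_{x ∈ Λ} q(x) ≤ Q^{1/(1−α)} · ε^{−α/(1−α)}; in particular −log(Σ_{x ∈ Λ} q(x)) ≥ D_α(p‖q) − (α/(1−α))·log(1/ε), where D_α(p‖q) := (1/(α−1))·log Q. -/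

import Mathlib

open Finset

/-- Single-shot achievability via the weighted likelihood ratio test: with
`Q = Σ_x p(x)^α q(x)^(1-α)`, `γ = (1 + (ε/Q)^(1/(1-α)))⁻¹` and
`Λ = {x : γ p(x) > (1-γ) q(x)}`, the test `Λ` has type I error at most `ε`, type II
error at most `Q^(1/(1-α)) ε^(-α/(1-α))`, and in particular
`-log (Σ_{x ∈ Λ} q(x)) ≥ D_α(p‖q) - (α/(1-α)) log (1/ε)`. -/
theorem single_shot_achievability_renyi
    {X : Type*} [Fintype X] [DecidableEq X] [Nonempty X]
    (p q : X → ℝ) (hp : ∀ x, 0 < p x) (hq : ∀ x, 0 < q x)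
    (hps : ∑ x, p x = 1) (hqs : ∑ x, q x = 1)
    (α ε : ℝ) (hα0 : 0 < α) (hα1 : α < 1) (hε0 : 0 < ε) (hε1 : ε < 1)
    (Q γ : ℝ) (hQ : Q = ∑ x, p x ^ α * q x ^ (1 - α))
    (hγ : γ = (1 + (ε / Q) ^ (1 / (1 - α)))⁻¹)
    (Λ : Finset X) (hΛ : Λ = Finset.univ.filter (fun x => (1 - γ) * q x < γ * p x)) :
    (∑ x ∈ Λᶜ, p x ≤ ε) ∧
    (∑ x ∈ Λ, q x ≤ Q ^ (1 / (1 - α)) * ε ^ (-(α / (1 - α)))) ∧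
    (-Real.log (∑ x ∈ Λ, q x)
      ≥ (1 / (α - 1)) * Real.log Q - (α / (1 - α)) * Real.log (1 / ε)) := by
  have h1α : 0 < 1 - α := by linarith
  have hQpos : 0 < Q := by
    rw [hQ]
    exact Finset.sum_pos (fun x _ => mul_pos (Real.rpow_pos_of_pos (hp x) _)
      (Real.rpow_pos_of_pos (hq x) _)) Finset.univ_nonempty
  set t := (ε / Q) ^ (1 / (1 - α)) with ht
  have htpos : 0 < t := Real.rpow_pos_of_pos (div_pos hε0 hQpos) _
  have hγpos : 0 < γ := by rw [hγ]; positivity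
  have h1mγ : 1 - γ = t * γ := by
    rw [hγ]
    field_simp
    ring
  have hmem : ∀ x, x ∈ Λ ↔ t * q x < p x := by
    intro x
    rw [hΛ, Finset.mem_filter]
    simp only [Finset.mem_univ, true_and]
    rw [h1mγ, show t * γ * q x = γ * (t * q x) by ring, mul_lt_mul_iff_of_pos_left hγpos]
  have ht1 : t ^ (1 - α) = ε / Q := by
    rw [ht, ← Real.rpow_mul (div_pos hε0 hQpos).le, one_div_mul_cancel h1α.ne', Real.rpow_one]
  -- Part 1
  have key1 : ∀ x ∈ Λᶜ, p x ≤ (ε / Q) * (p x ^ α * q x ^ (1 - α)) := by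
    intro x hx
    have hx' : p x ≤ t * q x := by
      have := Finset.mem_compl.mp hx
      rw [hmem x] at this
      linarith [not_lt.mp this]
    calc p x = p x ^ α * p x ^ (1 - α) := by
          rw [← Real.rpow_add (hp x)]; norm_num
      _ ≤ p x ^ α * (t * q x) ^ (1 - α) := by
          gcongr
          · exact Real.rpow_nonneg (hp x).le _
          · exact (hp x).le
      _ = (ε / Q) * (p x ^ α * q x ^ (1 - α)) := by
          rw [Real.mul_rpow htpos.le (hq x).le, ht1]; ring
  have hsub : ∀ (S : Finset X), ∑ x ∈ S, p x ^ α * q x ^ (1 - α) ≤ Q := by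
    intro S
    rw [hQ]
    exact Finset.sum_le_sum_of_subset_of_nonneg (Finset.subset_univ S)
      (fun x _ _ => mul_nonneg (Real.rpow_nonneg (hp x).le _) (Real.rpow_nonneg (hq x).le _))
  have b1 : ∑ x ∈ Λᶜ, p x ≤ ε := by
    calc ∑ x ∈ Λᶜ, p x ≤ ∑ x ∈ Λᶜ, (ε / Q) * (p x ^ α * q x ^ (1 - α)) :=
          Finset.sum_le_sum key1
      _ = (ε / Q) * ∑ x ∈ Λᶜ, p x ^ α * q x ^ (1 - α) := by rw [Finset.mul_sum]
      _ ≤ (ε / Q) * Q := by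
          have := hsub Λᶜ
          have h0 : 0 ≤ ε / Q := (div_pos hε0 hQpos).le
          nlinarith
      _ = ε := by field_simp
  -- Part 2
  have htα : t ^ (-α) = Q ^ (α / (1 - α)) * ε ^ (-(α / (1 - α))) := by
    rw [ht, ← Real.rpow_mul (div_pos hε0 hQpos).le,
      Real.div_rpow hε0.le hQpos.le,
      show 1 / (1 - α) * (-α) = -(α / (1 - α)) by field_simp,
      Real.rpow_neg hQpos.le (α / (1 - α))]
    rw [div_eq_mul_inv, inv_inv]
    ring
  have key2 : ∀ x ∈ Λ, q x ≤ t ^ (-α) * (p x ^ α * q x ^ (1 - α)) := by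
    intro x hx
    have hx' : t * q x < p x := (hmem x).mp hx
    have hqle : q x ≤ p x / t := by
      rw [le_div_iff₀ htpos]
      nlinarith
    calc q x = q x ^ α * q x ^ (1 - α) := by
          rw [← Real.rpow_add (hq x)]; norm_num
      _ ≤ (p x / t) ^ α * q x ^ (1 - α) := by
          gcongr
          · exact Real.rpow_nonneg (hq x).le _
          · exact (hq x).le
      _ = t ^ (-α) * (p x ^ α * q x ^ (1 - α)) := by
          rw [Real.div_rpow (hp x).le htpos.le, Real.rpow_neg htpos.le]
          ring
  have b2 : ∑ x ∈ Λ, q x ≤ Q ^ (1 / (1 - α)) * ε ^ (-(α / (1 - α))) := by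
    have hQQ : t ^ (-α) * Q = Q ^ (1 / (1 - α)) * ε ^ (-(α / (1 - α))) := by
      rw [htα, show Q ^ (α / (1 - α)) * ε ^ (-(α / (1 - α))) * Q
        = (Q * Q ^ (α / (1 - α))) * ε ^ (-(α / (1 - α))) by ring]
      congr 1
      rw [show Q * Q ^ (α / (1 - α)) = Q ^ (1:ℝ) * Q ^ (α / (1 - α)) by rw [Real.rpow_one],
        ← Real.rpow_add hQpos]
      congr 1
      field_simp
      ring
    calc ∑ x ∈ Λ, q x ≤ ∑ x ∈ Λ, t ^ (-α) * (p x ^ α * q x ^ (1 - α)) :=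
          Finset.sum_le_sum key2
      _ = t ^ (-α) * ∑ x ∈ Λ, p x ^ α * q x ^ (1 - α) := by rw [Finset.mul_sum]
      _ ≤ t ^ (-α) * Q := by
          have := hsub Λ
          have h0 : 0 ≤ t ^ (-α) := (Real.rpow_pos_of_pos htpos _).le
          nlinarith
      _ = Q ^ (1 / (1 - α)) * ε ^ (-(α / (1 - α))) := hQQ
  -- Part 3
  have hΛne : Λ.Nonempty := by
    by_contra h
    rw [Finset.not_nonempty_iff_eq_empty] at h
    have : ∑ x ∈ Λᶜ, p x = 1 := by rw [h, Finset.compl_empty]; exact hps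
    linarith
  have hqΛpos : 0 < ∑ x ∈ Λ, q x := Finset.sum_pos (fun x _ => hq x) hΛne
  have hlog : Real.log (∑ x ∈ Λ, q x)
      ≤ Real.log (Q ^ (1 / (1 - α)) * ε ^ (-(α / (1 - α)))) :=
    Real.log_le_log hqΛpos b2
  have hlogB : Real.log (Q ^ (1 / (1 - α)) * ε ^ (-(α / (1 - α))))
      = (1 / (1 - α)) * Real.log Q + (-(α / (1 - α))) * Real.log ε := by
    rw [Real.log_mul (Real.rpow_pos_of_pos hQpos _).ne' (Real.rpow_pos_of_pos hε0 _).ne',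
      Real.log_rpow hQpos, Real.log_rpow hε0]
  have hco : (1:ℝ) / (α - 1) = -(1 / (1 - α)) := by
    rw [show α - 1 = -(1 - α) by ring, div_neg]
  have hloginv : Real.log (1 / ε) = -Real.log ε := by
    rw [one_div, Real.log_inv]
  refine ⟨b1, b2, ?_⟩
  rw [hco, hloginv]
  rw [hlogB] at hlog
  linarith
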